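/- Let C_n be the cycle on x_1,...,x_n, 2 ≤ t ≤ n, and I = I_t(C_n) the t-path ideal. If I^(r) = I^r for all r ≥ 1, then t divides n. -/

import Mathlib

open MvPolynomial

noncomputable def symbolicPower {R : Type*} [CommRing R] (I : Ideal R) (n : ℕ) : Ideal R :=
  sInf { J : Ideal R | ∃ (p : Ideal R) (hp : p.IsPrime),
    p ∈ associatedPrimes R (R ⧸ I) ∧
    J = Ideal.comap (algebraMap R (Localization (@Ideal.primeCompl R _ p hp)))
        (Ideal.map (algebraMap R (Localization (@Ideal.primeCompl R _ p hp))) (I ^ n)) }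

noncomputable def edgeIdeal (k : Type*) {V : Type*} [CommRing k] [DecidableEq V]
    (E : Finset (Finset V)) : Ideal (MvPolynomial V k) :=
  Ideal.span ((fun e : Finset V => ∏ x ∈ e, (X x : MvPolynomial V k)) '' ↑E)

/-- the hyperedges of the t-path hypergraph of the cycle Cₙ: all sets of t
cyclically consecutive vertices. -/
def pathHyperedges (n t : ℕ) [NeZero n] : Finset (Finset (ZMod n)) :=
  Finset.image
    (fun i : ZMod n => Finset.image (fun j : Fin t => i + ((j : ℕ) : ZMod n)) Finset.univ)
    Finset.univ

namespace Stmt11Aux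

/-- exponent vector of the squarefree monomial supported on `e` -/
noncomputable def sig {V : Type*} [DecidableEq V] (e : Finset V) : V →₀ ℕ :=
  ∑ x ∈ e, Finsupp.single x 1

lemma sig_apply {V : Type*} [DecidableEq V] (e : Finset V) (v : V) :
    sig e v = if v ∈ e then 1 else 0 := by
  classical
  rw [sig, Finsupp.finset_sum_apply]
  rw [Finset.sum_congr rfl (fun x _ => Finsupp.single_apply (a := x) (b := (1:ℕ)) (a' := v))]
  simp [Finset.sum_ite_eq' e v (fun _ => (1:ℕ))]

lemma prod_X_eq {V : Type*} [DecidableEq V] {k : Type*} [CommRing k] (e : Finset V) :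
    (∏ x ∈ e, (X x : MvPolynomial V k)) = monomial (sig e) 1 := by
  classical
  induction e using Finset.induction with
  | empty => simp [sig]
  | @insert a e h ih =>
      rw [Finset.prod_insert h, ih]
      show (monomial (Finsupp.single a 1)) (1:k) * _ = _
      rw [monomial_mul, one_mul]
      congr 1
      rw [sig, sig, Finset.sum_insert h]

lemma prod_monomial {V : Type*} [DecidableEq V] {k : Type*} [CommRing k] {α : Type*}
    (s : Finset α) (f : α → (V →₀ ℕ)) :
    (∏ a ∈ s, (monomial (f a) (1 : k) : MvPolynomial V k)) = monomial (∑ a ∈ s, f a) 1 := by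
  classical
  induction s using Finset.induction with
  | empty => simp
  | @insert a s h ih => rw [Finset.prod_insert h, ih, Finset.sum_insert h, monomial_mul, one_mul]

lemma prod_mem_pow {R : Type*} [CommRing R] (I : Ideal R) {α : Type*} (s : Finset α) (f : α → R)
    (hf : ∀ a ∈ s, f a ∈ I) : (∏ a ∈ s, f a) ∈ I ^ s.card := by
  classical
  induction s using Finset.induction with
  | empty => simp
  | @insert a s h ih =>
      rw [Finset.prod_insert h, Finset.card_insert_of_notMem h, pow_succ']
      exact Ideal.mul_mem_mul (hf a (Finset.mem_insert_self a s))
        (ih fun b hb => hf b (Finset.mem_insert_of_mem hb))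

end Stmt11Aux

open Stmt11Aux

/-- if all symbolic powers of the t-path ideal of the cycle Cₙ equal
the ordinary powers, then t divides n. -/
theorem stmt11 {k : Type*} [Field k] (n t : ℕ) [NeZero n] (hn : 2 ≤ n) (ht : 2 ≤ t)
    (htn : t ≤ n)
    (h : ∀ r : ℕ, 1 ≤ r →
      symbolicPower (edgeIdeal k (pathHyperedges n t)) r =
        (edgeIdeal k (pathHyperedges n t)) ^ r) :
    t ∣ n := by
  classical
  by_contra hdvd
  set I := edgeIdeal k (pathHyperedges n t) with hI
  set win : ZMod n → Finset (ZMod n) :=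
    fun i => Finset.image (fun j : Fin t => i + ((j : ℕ) : ZMod n)) Finset.univ with hwin
  have htpos : 0 < t := by omega
  have hinj : ∀ i : ZMod n, Function.Injective (fun j : Fin t => i + ((j : ℕ) : ZMod n)) := by
    intro i j1 j2 hj
    have h1 : ((j1 : ℕ) : ZMod n) = ((j2 : ℕ) : ZMod n) := by
      exact add_left_cancel hj
    have h2 := congrArg ZMod.val h1
    rw [ZMod.val_natCast_of_lt (lt_of_lt_of_le j1.isLt htn),
      ZMod.val_natCast_of_lt (lt_of_lt_of_le j2.isLt htn)] at h2
    exact Fin.ext h2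
  have card_win : ∀ i : ZMod n, (win i).card = t := by
    intro i
    rw [hwin]
    rw [Finset.card_image_of_injective _ (hinj i), Finset.card_univ, Fintype.card_fin]
  -- rewrite I as a monomial ideal
  have Ispan : I = Ideal.span
      ((fun s => monomial s (1 : k)) '' (Set.range fun i : ZMod n => sig (win i))) := by
    rw [hI]
    unfold edgeIdeal pathHyperedges
    congr 1
    ext f
    simp only [Finset.coe_image, Finset.coe_univ, Set.image_univ, Set.mem_image, Set.mem_range]
    constructor
    · rintro ⟨e, ⟨i, rfl⟩, rfl⟩
      exact ⟨sig (win i), ⟨i, rfl⟩, (prod_X_eq _).symm⟩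
    · rintro ⟨s, ⟨i, rfl⟩, rfl⟩
      exact ⟨win i, ⟨i, rfl⟩, prod_X_eq _⟩
  have memI : ∀ x : MvPolynomial (ZMod n) k,
      x ∈ I ↔ ∀ m ∈ x.support, ∃ i : ZMod n, sig (win i) ≤ m := by
    intro x
    rw [Ispan, mem_ideal_span_monomial_image]
    constructor
    · intro hx m hm
      obtain ⟨si, ⟨i, rfl⟩, hle⟩ := hx m hm
      exact ⟨i, hle⟩
    · intro hx m hm
      obtain ⟨i, hle⟩ := hx m hm
      exact ⟨_, ⟨i, rfl⟩, hle⟩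
  set r : ℕ := n / t + 1 with hr
  have hr1 : 1 ≤ r := by rw [hr]; exact Nat.le_add_left 1 _
  have hmod0 : n % t ≠ 0 := fun hm => hdvd (Nat.dvd_of_mod_eq_zero hm)
  have hmodlt : n % t < t := Nat.mod_lt n htpos
  have hdiv : t * (n / t) + n % t = n := Nat.div_add_mod n t
  have hmodpos : 0 < n % t := Nat.pos_of_ne_zero hmod0
  have hnr : n < t * r := by
    have h1 : t * r = t * (n / t) + t := by rw [hr, mul_add, mul_one]
    linarith
  set f₀ : MvPolynomial (ZMod n) k := monomial (sig Finset.univ) 1 with hf₀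
  -- f₀ belongs to the r-th symbolic power
  have hf0sym : f₀ ∈ symbolicPower I r := by
    unfold symbolicPower
    rw [Submodule.mem_sInf]
    rintro J ⟨p, hp, hpass, rfl⟩
    obtain ⟨-, x, hxann⟩ := isAssociatedPrime_iff.mp hpass
    obtain ⟨g, rfl⟩ := Ideal.Quotient.mkₐ_surjective (MvPolynomial (ZMod n) k) _ x
    have hmem_p : ∀ a : MvPolynomial (ZMod n) k, a ∈ p ↔ a * g ∈ I := by
      intro a
      rw [hxann, Submodule.mem_colon_singleton, Submodule.mem_bot, ← map_smul, smul_eq_mul,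
        Ideal.Quotient.mkₐ_eq_mk, ← Ideal.Quotient.mk_eq_mk, Submodule.Quotient.mk_eq_zero]
    have hIp : I ≤ p := fun a ha => (hmem_p a).mpr (Ideal.mul_mem_right g I ha)
    have hgI : g ∉ I := by
      intro hg
      exact hp.ne_top (Ideal.eq_top_iff_one p |>.mpr ((hmem_p 1).mpr (by rwa [one_mul])))
    set W : Finset (ZMod n) := Finset.univ.filter fun v => X v ∈ p with hW
    have hcov : ∀ i : ZMod n, ∃ v ∈ win i, (X v : MvPolynomial (ZMod n) k) ∈ p := by
      intro i
      have h1 : (∏ x ∈ win i, (X x : MvPolynomial (ZMod n) k)) ∈ p := by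
        apply hIp
        rw [Ispan, prod_X_eq]
        exact Ideal.subset_span ⟨sig (win i), ⟨i, rfl⟩, rfl⟩
      exact (Ideal.IsPrime.prod_mem_iff (hp := hp)).mp h1
    -- counting: every cover has at least r vertices
    have hWcard : r ≤ W.card := by
      choose c hc1 hc2 using hcov
      have hmaps : ∀ i : ZMod n, i ∈ Finset.univ → c i ∈ W := fun i _ =>
        Finset.mem_filter.mpr ⟨Finset.mem_univ _, hc2 i⟩
      have hfib : ∀ b ∈ W, (Finset.univ.filter fun i => c i = b).card ≤ t := by
        intro b _
        have hsub : (Finset.univ.filter fun i => c i = b) ⊆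
            Finset.image (fun j : Fin t => b - ((j : ℕ) : ZMod n)) Finset.univ := by
          intro i hi
          have hcmem : c i ∈ win i := hc1 i
          rw [Finset.mem_filter] at hi
          rw [hi.2, hwin, Finset.mem_image] at hcmem
          obtain ⟨j, -, hj⟩ := hcmem
          refine Finset.mem_image.mpr ⟨j, Finset.mem_univ _, ?_⟩
          rw [← hj]; ring
        calc (Finset.univ.filter fun i => c i = b).card
            ≤ (Finset.image (fun j : Fin t => b - ((j : ℕ) : ZMod n)) Finset.univ).card :=
              Finset.card_le_card hsub
          _ ≤ (Finset.univ : Finset (Fin t)).card := Finset.card_image_le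
          _ = t := by simp
      have hcount := Finset.card_le_mul_card_image_of_maps_to hmaps t hfib
      rw [Finset.card_univ, ZMod.card] at hcount
      by_contra hlt
      push_neg at hlt
      rw [hr] at hlt
      have hle : W.card ≤ n / t := Nat.lt_succ_iff.mp hlt
      have h2 : t * W.card ≤ t * (n / t) := Nat.mul_le_mul_left t hle
      linarith
    -- extract a witness monomial of g not in I
    obtain ⟨μ, hμsupp, hμ⟩ : ∃ m ∈ g.support, ∀ i : ZMod n, ¬ sig (win i) ≤ m := by
      by_contra hcon
      push_neg at hcon
      exact hgI ((memI g).mpr fun m hm => hcon m hm)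
    have hμW : ∀ v : ZMod n, (X v : MvPolynomial (ZMod n) k) ∈ p →
        μ v = 0 ∧ ∃ i, v ∈ win i ∧ ∀ u ∈ win i, u ≠ v → 0 < μ u := by
      intro v hv
      have hXg : (X v : MvPolynomial (ZMod n) k) * g ∈ I := (hmem_p _).mp hv
      have hsupp : Finsupp.single v 1 + μ ∈ (X v * g).support := by
        rw [support_X_mul]
        exact Finset.mem_map.mpr ⟨μ, hμsupp, rfl⟩
      obtain ⟨i, hle⟩ := (memI _).mp hXg _ hsupp
      have hsv : ∀ e : Finset (ZMod n), ∀ a, sig e a ≤ 1 := by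
        intro e a; rw [sig_apply]; split <;> omega
      have hv0 : μ v = 0 := by
        by_contra h0
        apply hμ i
        intro a
        have ha := Finsupp.le_def.mp hle a
        by_cases hav : a = v
        · subst hav
          have := hsv (win i) a
          omega
        · rw [Finsupp.add_apply, Finsupp.single_apply, if_neg (fun hh => hav hh.symm)] at ha
          omega
      have hvin : v ∈ win i := by
        by_contra hvn
        apply hμ i
        intro a
        have ha := Finsupp.le_def.mp hle a
        by_cases hav : a = v
        · subst hav
          rw [sig_apply, if_neg hvn]
          omega
        · rw [Finsupp.add_apply, Finsupp.single_apply, if_neg (fun hh => hav hh.symm)] at ha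
          omega
      refine ⟨hv0, i, hvin, ?_⟩
      intro u hu hune
      have ha := Finsupp.le_def.mp hle u
      rw [sig_apply, if_pos hu, Finsupp.add_apply, Finsupp.single_apply,
        if_neg (fun hh => hune hh.symm)] at ha
      omega
    obtain ⟨W', hW'sub, hW'card⟩ := Finset.exists_subset_card_eq hWcard
    have hkey : ∀ w : ZMod n, ∃ i : ZMod n,
        w ∈ W' → (w ∈ win i ∧ ∀ u ∈ win i, (X u : MvPolynomial (ZMod n) k) ∈ p → u = w) := by
      intro w
      by_cases hw : w ∈ W'
      · have hwp : (X w : MvPolynomial (ZMod n) k) ∈ p :=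
          (Finset.mem_filter.mp (hW'sub hw)).2
        obtain ⟨-, i, hin, hpos⟩ := hμW w hwp
        refine ⟨i, fun _ => ⟨hin, ?_⟩⟩
        intro u hu hup
        by_contra hne
        have h1 := hpos u hu hne
        have h2 := (hμW u hup).1
        omega
      · exact ⟨0, fun hw' => absurd hw' hw⟩
    choose iw hiw using hkey
    set E : (ZMod n) →₀ ℕ := ∑ w ∈ W', sig (win (iw w)) with hE
    have hm₀ : (monomial E (1 : k) : MvPolynomial (ZMod n) k) ∈ I ^ r := by
      rw [hE, ← prod_monomial]
      have := prod_mem_pow I W' (fun w => monomial (sig (win (iw w))) (1 : k))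
        (fun w _ => by rw [Ispan]; exact Ideal.subset_span ⟨sig (win (iw w)), ⟨iw w, rfl⟩, rfl⟩)
      rwa [hW'card] at this
    have hE1 : ∀ v : ZMod n, (X v : MvPolynomial (ZMod n) k) ∈ p → E v ≤ 1 := by
      intro v hv
      rw [hE, Finsupp.finset_sum_apply]
      calc (∑ w ∈ W', sig (win (iw w)) v) ≤ ∑ w ∈ W', (if w = v then 1 else 0) := by
            apply Finset.sum_le_sum
            intro w hw
            by_cases hvw : w = v
            · rw [if_pos hvw, sig_apply]; split <;> omega
            · rw [if_neg hvw, sig_apply, if_neg]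
              intro hvin
              exact hvw (((hiw w hw).2 v hvin hv).symm)
        _ = if v ∈ W' then 1 else 0 := Finset.sum_ite_eq' W' v (fun _ => 1)
        _ ≤ 1 := by split <;> omega
    have hEr : ∀ v : ZMod n, E v ≤ r := by
      intro v
      rw [hE, Finsupp.finset_sum_apply]
      calc (∑ w ∈ W', sig (win (iw w)) v) ≤ ∑ _w ∈ W', 1 := by
            apply Finset.sum_le_sum
            intro w _
            rw [sig_apply]; split <;> omega
        _ = W'.card := by simp
        _ = r := hW'card
    set T : (ZMod n) →₀ ℕ := sig Finset.univ + r • sig (Finset.univ \ W) with hT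
    have hET : E ≤ T := by
      rw [Finsupp.le_def]
      intro v
      rw [hT, Finsupp.add_apply, Finsupp.smul_apply, sig_apply, sig_apply, if_pos (Finset.mem_univ v)]
      by_cases hv : v ∈ W
      · have := hE1 v (Finset.mem_filter.mp hv).2
        omega
      · have hvs : v ∈ Finset.univ \ W := Finset.mem_sdiff.mpr ⟨Finset.mem_univ v, hv⟩
        have := hEr v
        rw [if_pos hvs]
        simp only [smul_eq_mul, mul_one]
        omega
    set u : MvPolynomial (ZMod n) k := monomial (r • sig (Finset.univ \ W)) 1 with hu
    have hfu : f₀ * u ∈ I ^ r := by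
      have h1 : f₀ * u = monomial T 1 := by
        rw [hf₀, hu, monomial_mul, one_mul, hT]
      have h2 : (monomial T (1 : k) : MvPolynomial (ZMod n) k)
          = monomial E 1 * monomial (T - E) 1 := by
        rw [monomial_mul, one_mul, add_tsub_cancel_of_le hET]
      rw [h1, h2]
      exact Ideal.mul_mem_right _ _ hm₀
    have hup : u ∉ p := by
      have hueq : u = (∏ v ∈ Finset.univ \ W, (X v : MvPolynomial (ZMod n) k)) ^ r := by
        rw [prod_X_eq, monomial_pow, one_pow, hu]
      intro hmem
      rw [hueq] at hmem
      have h1 := (hp.pow_mem_iff_mem r (by omega)).mp hmem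
      obtain ⟨v, hvmem, hvp⟩ := (Ideal.IsPrime.prod_mem_iff (hp := hp)).mp h1
      exact (Finset.mem_sdiff.mp hvmem).2 (Finset.mem_filter.mpr ⟨Finset.mem_univ v, hvp⟩)
    -- conclude membership in the localization comap
    haveI := hp
    rw [Ideal.mem_comap]
    have h1 : (algebraMap (MvPolynomial (ZMod n) k) (Localization p.primeCompl)) (f₀ * u) ∈
        Ideal.map (algebraMap (MvPolynomial (ZMod n) k) (Localization p.primeCompl)) (I ^ r) :=
      Ideal.mem_map_of_mem _ hfu
    rw [map_mul] at h1
    have hunit : IsUnit ((algebraMap (MvPolynomial (ZMod n) k) (Localization p.primeCompl)) u) :=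
      IsLocalization.map_units _ (⟨u, hup⟩ : p.primeCompl)
    exact (Ideal.mul_unit_mem_iff_mem _ hunit).mp h1
  -- so f₀ ∈ I ^ r
  have hfr : f₀ ∈ I ^ r := by rw [← h r hr1]; exact hf0sym
  -- degree contradiction
  set deg : ((ZMod n) →₀ ℕ) → ℕ := fun s => ∑ v : ZMod n, s v with hdeg
  have hdegsig : ∀ e : Finset (ZMod n), deg (sig e) = e.card := by
    intro e
    rw [hdeg]
    simp only [sig_apply]
    rw [Finset.sum_ite_mem, Finset.univ_inter, Finset.sum_const, smul_eq_mul, mul_one]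
  set Jd : ℕ → Ideal (MvPolynomial (ZMod n) k) :=
    fun d => Ideal.span ((fun s => monomial s (1 : k)) '' {s | d ≤ deg s}) with hJd
  have hJmul : ∀ a b : ℕ, Jd a * Jd b ≤ Jd (a + b) := by
    intro a b
    rw [hJd, Ideal.span_mul_span']
    apply Ideal.span_le.mpr
    rintro x ⟨y, ⟨s1, hs1, rfl⟩, z, ⟨s2, hs2, rfl⟩, rfl⟩
    refine Ideal.subset_span ⟨s1 + s2, ?_, by simp [monomial_mul]⟩
    have : deg (s1 + s2) = deg s1 + deg s2 := by
      rw [hdeg]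
      simp only [Finsupp.add_apply]
      rw [Finset.sum_add_distrib]
    simp only [Set.mem_setOf_eq] at hs1 hs2 ⊢
    omega
  have hIJ : I ≤ Jd t := by
    rw [Ispan]
    apply Ideal.span_le.mpr
    rintro x ⟨s, ⟨i, rfl⟩, rfl⟩
    refine Ideal.subset_span ⟨sig (win i), ?_, rfl⟩
    simp only [Set.mem_setOf_eq]
    rw [hdegsig, card_win]
  have hpow : ∀ s : ℕ, I ^ (s + 1) ≤ Jd (t * (s + 1)) := by
    intro s
    induction s with
    | zero => simpa using hIJ
    | succ s ih =>
        have h1 : I ^ (s + 2) = I ^ (s + 1) * I := by rw [← pow_succ]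
        rw [h1]
        calc I ^ (s + 1) * I ≤ Jd (t * (s + 1)) * Jd t := Ideal.mul_mono ih hIJ
          _ ≤ Jd (t * (s + 1) + t) := hJmul _ _
          _ = Jd (t * (s + 2)) := by ring_nf
  have hf₀J : f₀ ∈ Jd (t * r) := hpow (n / t) hfr
  rw [hJd, mem_ideal_span_monomial_image] at hf₀J
  have hsupp : sig (Finset.univ : Finset (ZMod n)) ∈ f₀.support := by
    rw [hf₀, support_monomial, if_neg (one_ne_zero)]
    exact Finset.mem_singleton_self _
  obtain ⟨s, hs_deg, hs_le⟩ := hf₀J _ hsupp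
  simp only [Set.mem_setOf_eq] at hs_deg
  have hsle : deg s ≤ deg (sig (Finset.univ : Finset (ZMod n))) := by
    rw [hdeg]
    exact Finset.sum_le_sum fun v _ => Finsupp.le_def.mp hs_le v
  rw [hdegsig, Finset.card_univ, ZMod.card] at hsle
  omega
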